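/- Let f : Fin n → ℝ[x₁,…,xₙ] be a polynomial vector field, p ∈ ℝ[x₁,…,xₙ], and let N ≥ 1 satisfy L^{N+1}_f p ∈ ⟨L¹_f p, …, L^N_f p⟩. Then for every point a ∈ ℝⁿ: if the evaluations (L^j_f p)(a) vanish for all 1 ≤ j ≤ N, then (L^m_f p)(a) = 0 for all m ≥ 1. Consequently, if the pointwise rank γ_{p,f}(a) = min{k ≥ 1 : (L^k_f p)(a) ≠ 0} is finite, then γ_{p,f}(a) ≤ N. -/

import Mathlib

open MvPolynomial

/-- Lie derivative of a polynomial along a polynomial vector field: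
`L_f p = Σᵢ (∂p/∂xᵢ)·fᵢ`. -/
noncomputable def lieDeriv {n : ℕ} (f : Fin n → MvPolynomial (Fin n) ℝ)
    (p : MvPolynomial (Fin n) ℝ) : MvPolynomial (Fin n) ℝ :=
  ∑ i, pderiv i p * f i

lemma lieDeriv_mul {n : ℕ} (f : Fin n → MvPolynomial (Fin n) ℝ)
    (a b : MvPolynomial (Fin n) ℝ) :
    lieDeriv f (a * b) = lieDeriv f a * b + a * lieDeriv f b := by
  simp only [lieDeriv, pderiv_mul, add_mul, Finset.sum_add_distrib,
    Finset.mul_sum, Finset.sum_mul]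
  congr 1 <;> apply Finset.sum_congr rfl <;> intros <;> ring

/-- The key stability lemma: the ideal generated by the first `N` Lie
derivatives is stable under `lieDeriv`, given the hypothesis. -/
theorem lie_rank_theorem {n : ℕ} (f : Fin n → MvPolynomial (Fin n) ℝ)
    (p : MvPolynomial (Fin n) ℝ) (N : ℕ) (hN : 1 ≤ N)
    (h : (lieDeriv f)^[N + 1] p ∈
      Ideal.span ((fun j => (lieDeriv f)^[j] p) '' Set.Icc 1 N)) :
    (∀ a : Fin n → ℝ,
      (∀ j, 1 ≤ j → j ≤ N → eval a ((lieDeriv f)^[j] p) = 0) →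
      ∀ m, 1 ≤ m → eval a ((lieDeriv f)^[m] p) = 0) ∧
    (∀ a : Fin n → ℝ,
      {k : ℕ | 1 ≤ k ∧ eval a ((lieDeriv f)^[k] p) ≠ 0}.Nonempty →
      sInf {k : ℕ | 1 ≤ k ∧ eval a ((lieDeriv f)^[k] p) ≠ 0} ≤ N) := by
  set J : Ideal (MvPolynomial (Fin n) ℝ) :=
    Ideal.span ((fun j => (lieDeriv f)^[j] p) '' Set.Icc 1 N) with hJ
  -- J is stable under lieDeriv
  have stable : ∀ q ∈ J, lieDeriv f q ∈ J := by
    intro q hq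
    have := Submodule.span_induction
      (p := fun q (_ : q ∈ J) => q ∈ J ∧ lieDeriv f q ∈ J) ?_ ?_ ?_ ?_ hq
    · exact this.2
    · rintro x ⟨j, ⟨hj1, hjN⟩, rfl⟩
      constructor
      · exact Ideal.subset_span ⟨j, ⟨hj1, hjN⟩, rfl⟩
      · have : lieDeriv f ((lieDeriv f)^[j] p) = (lieDeriv f)^[j + 1] p := by
          rw [Function.iterate_succ_apply']
        rw [this]
        rcases lt_or_eq_of_le hjN with hlt | heq
        · exact Ideal.subset_span ⟨j + 1, ⟨le_trans hj1 (Nat.le_succ j), hlt⟩, rfl⟩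
        · subst heq; exact h
    · constructor
      · exact J.zero_mem
      · simp [lieDeriv]
    · rintro x y _ _ ⟨hx, hx'⟩ ⟨hy, hy'⟩
      constructor
      · exact J.add_mem hx hy
      · have : lieDeriv f (x + y) = lieDeriv f x + lieDeriv f y := by
          simp [lieDeriv, add_mul, Finset.sum_add_distrib]
        rw [this]; exact J.add_mem hx' hy'
    · rintro r x _ ⟨hx, hx'⟩
      constructor
      · exact J.smul_mem r hx
      · have : lieDeriv f (r • x) = lieDeriv f r * x + r * lieDeriv f x := by
          rw [smul_eq_mul, lieDeriv_mul]
        rw [smul_eq_mul, lieDeriv_mul]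
        exact J.add_mem (J.mul_mem_left _ hx) (J.mul_mem_left _ hx')
  -- all iterates of order ≥ 1 lie in J
  have mem : ∀ m, 1 ≤ m → (lieDeriv f)^[m] p ∈ J := by
    intro m hm
    obtain ⟨k, rfl⟩ := Nat.exists_eq_add_of_le hm
    clear hm
    induction k with
    | zero => exact Ideal.subset_span ⟨1, ⟨le_refl 1, hN⟩, rfl⟩
    | succ k ih =>
      have : (1 : ℕ) + (k + 1) = (1 + k) + 1 := by ring
      rw [this, Function.iterate_succ_apply']
      exact stable _ ih
  have part1 : ∀ a : Fin n → ℝ,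
      (∀ j, 1 ≤ j → j ≤ N → eval a ((lieDeriv f)^[j] p) = 0) →
      ∀ m, 1 ≤ m → eval a ((lieDeriv f)^[m] p) = 0 := by
    intro a ha m hm
    have hmem := mem m hm
    refine Submodule.span_induction
      (p := fun q (_ : q ∈ J) => eval a q = 0) ?_ ?_ ?_ ?_ hmem
    · rintro x ⟨j, ⟨hj1, hjN⟩, rfl⟩
      exact ha j hj1 hjN
    · simp
    · intro x y _ _ hx hy; simp [hx, hy]
    · intro r x _ hx; simp [smul_eq_mul, hx]
  refine ⟨part1, ?_⟩
  intro a hne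
  by_contra hcon
  push_neg at hcon
  have hk := Nat.sInf_mem hne
  set k := sInf {k : ℕ | 1 ≤ k ∧ eval a ((lieDeriv f)^[k] p) ≠ 0}
  have ha : ∀ j, 1 ≤ j → j ≤ N → eval a ((lieDeriv f)^[j] p) = 0 := by
    intro j hj1 hjN
    by_contra hj
    have : k ≤ j := Nat.sInf_le ⟨hj1, hj⟩
    omega
  exact hk.2 (part1 a ha k hk.1)
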